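/- Let L, K, R be positive integers, let R_a be an R×R Hermitian positive definite complex matrix with eigenvalues η_1,…,η_R, let R_t be an L×L Hermitian positive definite complex matrix with eigenvalues δ_1,…,δ_L, let A be a K×L complex matrix with AᴴA = c·I_L for some c > 0, and let σ² > 0. Then trace(((R_a ⊗ R_t)⁻¹ + (I_R ⊗ A)ᴴ(σ²·I_{RK})⁻¹(I_R ⊗ A))⁻¹) = Σ_{j=1}^{R} Σ_{i=1}^{L} η_j·δ_i / (1 + (c/σ²)·η_j·δ_i). (This is the closed-form MSE of the optimal centralized LMMSE channel estimator over the full antenna array.) -/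

import Mathlib

open Matrix
open scoped ComplexOrder Kronecker

lemma conjT_kron {l m n p : Type*} (A : Matrix l m ℂ) (B : Matrix n p ℂ) :
    (A ⊗ₖ B)ᴴ = Aᴴ ⊗ₖ Bᴴ := by
  ext ⟨i, j⟩ ⟨k, r⟩
  simp [Matrix.conjTranspose_apply, Matrix.kroneckerMap_apply]

lemma conj_inv_lemma {n : Type*} [Fintype n] [DecidableEq n] (W B C : Matrix n n ℂ)
    (hW : Wᴴ * W = 1) (hW' : W * Wᴴ = 1) (hBC : B * C = 1) :
    (W * B * Wᴴ)⁻¹ = W * C * Wᴴ := by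
  apply Matrix.inv_eq_right_inv
  calc W * B * Wᴴ * (W * C * Wᴴ) = W * (B * ((Wᴴ * W) * (C * Wᴴ))) := by
        simp only [Matrix.mul_assoc]
    _ = W * ((B * C) * Wᴴ) := by rw [hW, Matrix.one_mul, Matrix.mul_assoc]
    _ = 1 := by rw [hBC, Matrix.one_mul, hW']

/-- Closed-form MSE of the optimal centralized LMMSE channel estimator over the full
antenna array: with composite channel covariance `R_a ⊗ R_t` and composite pilot matrix
`I_R ⊗ A` where `AᴴA = c·I_L`,
`trace(((R_a ⊗ R_t)⁻¹ + (I_R ⊗ A)ᴴ(σ²I_{RK})⁻¹(I_R ⊗ A))⁻¹)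
  = Σ_j Σ_i η_j δ_i / (1 + (c/σ²) η_j δ_i)`. -/
theorem optimal_lmmse_mse {L K Rdim : ℕ} (hL : 0 < L) (hK : 0 < K) (hRdim : 0 < Rdim)
    (Ra : Matrix (Fin Rdim) (Fin Rdim) ℂ) (hRa : Ra.PosDef)
    (η : Fin Rdim → ℝ) (hη : hRa.isHermitian.eigenvalues = η)
    (Rt : Matrix (Fin L) (Fin L) ℂ) (hRt : Rt.PosDef)
    (δ : Fin L → ℝ) (hδ : hRt.isHermitian.eigenvalues = δ)
    (A : Matrix (Fin K) (Fin L) ℂ) (c : ℝ) (hc : 0 < c)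
    (hA : Aᴴ * A = (c : ℂ) • (1 : Matrix (Fin L) (Fin L) ℂ))
    (σ2 : ℝ) (hσ : 0 < σ2) :
    Matrix.trace ((Ra ⊗ₖ Rt)⁻¹ +
        ((1 : Matrix (Fin Rdim) (Fin Rdim) ℂ) ⊗ₖ A)ᴴ *
          ((σ2 : ℂ) • (1 : Matrix (Fin Rdim × Fin K) (Fin Rdim × Fin K) ℂ))⁻¹ *
          ((1 : Matrix (Fin Rdim) (Fin Rdim) ℂ) ⊗ₖ A))⁻¹
      = ∑ j, ∑ i, ((η j * δ i / (1 + (c / σ2) * (η j * δ i)) : ℝ) : ℂ) := by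
  have hσ2ne : (σ2 : ℂ) ≠ 0 := by exact_mod_cast hσ.ne'
  -- positivity of eigenvalues
  have hηpos : ∀ j, 0 < η j := fun j => by rw [← hη]; exact hRa.eigenvalues_pos j
  have hδpos : ∀ i, 0 < δ i := fun i => by rw [← hδ]; exact hRt.eigenvalues_pos i
  set s : ℂ := ((c / σ2 : ℝ) : ℂ) with hs
  have hspos : 0 < c / σ2 := div_pos hc hσ
  -- step 1: simplify the pilot term to `s • 1`
  have hinvσ : ((σ2 : ℂ) • (1 : Matrix (Fin Rdim × Fin K) (Fin Rdim × Fin K) ℂ))⁻¹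
      = (σ2 : ℂ)⁻¹ • 1 := by
    apply Matrix.inv_eq_right_inv
    rw [smul_mul_assoc, mul_smul_comm, one_mul, smul_smul, mul_inv_cancel₀ hσ2ne, one_smul]
  have hpilot : ((1 : Matrix (Fin Rdim) (Fin Rdim) ℂ) ⊗ₖ A)ᴴ *
      ((σ2 : ℂ) • (1 : Matrix (Fin Rdim × Fin K) (Fin Rdim × Fin K) ℂ))⁻¹ *
      ((1 : Matrix (Fin Rdim) (Fin Rdim) ℂ) ⊗ₖ A) = s • 1 := by
    rw [hinvσ, conjT_kron, conjTranspose_one, Matrix.mul_smul, Matrix.mul_one,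
      Matrix.smul_mul, ← Matrix.mul_kronecker_mul, one_mul, hA, Matrix.kronecker_smul,
      Matrix.one_kronecker_one, smul_smul]
    rw [hs]
    push_cast
    ring
  rw [hpilot]
  -- step 2: spectral decomposition
  set U : Matrix (Fin Rdim) (Fin Rdim) ℂ :=
    (hRa.isHermitian.eigenvectorUnitary : Matrix (Fin Rdim) (Fin Rdim) ℂ) with hU
  set V : Matrix (Fin L) (Fin L) ℂ :=
    (hRt.isHermitian.eigenvectorUnitary : Matrix (Fin L) (Fin L) ℂ) with hV
  have hUu : Uᴴ * U = 1 := by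
    rw [← Matrix.star_eq_conjTranspose]
    exact (Matrix.mem_unitaryGroup_iff').mp (hRa.isHermitian.eigenvectorUnitary).2
  have hUu' : U * Uᴴ = 1 := by
    rw [← Matrix.star_eq_conjTranspose]
    exact (Matrix.mem_unitaryGroup_iff).mp (hRa.isHermitian.eigenvectorUnitary).2
  have hVu : Vᴴ * V = 1 := by
    rw [← Matrix.star_eq_conjTranspose]
    exact (Matrix.mem_unitaryGroup_iff').mp (hRt.isHermitian.eigenvectorUnitary).2
  have hVu' : V * Vᴴ = 1 := by
    rw [← Matrix.star_eq_conjTranspose]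
    exact (Matrix.mem_unitaryGroup_iff).mp (hRt.isHermitian.eigenvectorUnitary).2
  have hspecA : Ra = U * Matrix.diagonal (fun j => (η j : ℂ)) * Uᴴ := by
    have := hRa.isHermitian.spectral_theorem
    rw [hη] at this; exact this
  have hspecT : Rt = V * Matrix.diagonal (fun i => (δ i : ℂ)) * Vᴴ := by
    have := hRt.isHermitian.spectral_theorem
    rw [hδ] at this; exact this
  set W : Matrix (Fin Rdim × Fin L) (Fin Rdim × Fin L) ℂ := U ⊗ₖ V with hWdef
  have hWH : Wᴴ = Uᴴ ⊗ₖ Vᴴ := conjT_kron U V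
  have hWu : Wᴴ * W = 1 := by
    rw [hWH, hWdef, ← Matrix.mul_kronecker_mul, hUu, hVu, Matrix.one_kronecker_one]
  have hWu' : W * Wᴴ = 1 := by
    rw [hWH, hWdef, ← Matrix.mul_kronecker_mul, hUu', hVu', Matrix.one_kronecker_one]
  -- the diagonal eigenvalue function
  set d : Fin Rdim × Fin L → ℝ := fun p => η p.1 * δ p.2 with hd
  have hdpos : ∀ p, 0 < d p := fun p => mul_pos (hηpos p.1) (hδpos p.2)
  have hkron : Ra ⊗ₖ Rt = W * Matrix.diagonal (fun p => (d p : ℂ)) * Wᴴ := by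
    rw [hspecA, hspecT, Matrix.mul_kronecker_mul, Matrix.mul_kronecker_mul,
      Matrix.diagonal_kronecker_diagonal, hWH, hWdef]
    have hfun : (fun mn : Fin Rdim × Fin L => (η mn.1 : ℂ) * (δ mn.2 : ℂ))
        = fun p => ((d p : ℝ) : ℂ) := by
      funext p
      rw [hd]
      push_cast
      ring
    rw [hfun]
  -- inverses of the diagonal parts
  have hDD : Matrix.diagonal (fun p => (d p : ℂ)) *
      Matrix.diagonal (fun p => ((d p : ℝ)⁻¹ : ℝ) : Fin Rdim × Fin L → ℂ)
      = 1 := by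
    rw [Matrix.diagonal_mul_diagonal]
    have hfun : (fun p : Fin Rdim × Fin L => ((d p : ℝ) : ℂ) * (((d p)⁻¹ : ℝ) : ℂ))
        = fun _ => (1 : ℂ) := by
      funext p
      rw [← Complex.ofReal_mul, mul_inv_cancel₀ (hdpos p).ne', Complex.ofReal_one]
    rw [hfun, Matrix.diagonal_one]
  have hkroninv : (Ra ⊗ₖ Rt)⁻¹ =
      W * Matrix.diagonal (fun p => (((d p)⁻¹ : ℝ) : ℂ)) * Wᴴ := by
    rw [hkron]
    exact conj_inv_lemma _ _ _ hWu hWu' hDD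
  -- the sum matrix as a conjugated diagonal
  set g : Fin Rdim × Fin L → ℝ := fun p => (d p)⁻¹ + c / σ2 with hg
  have hgpos : ∀ p, 0 < g p := fun p => add_pos (inv_pos.mpr (hdpos p)) hspos
  have hsum : (Ra ⊗ₖ Rt)⁻¹ + s • (1 : Matrix (Fin Rdim × Fin L) (Fin Rdim × Fin L) ℂ)
      = W * Matrix.diagonal (fun p => ((g p : ℝ) : ℂ)) * Wᴴ := by
    have h1 : s • (1 : Matrix (Fin Rdim × Fin L) (Fin Rdim × Fin L) ℂ)
        = W * (s • 1) * Wᴴ := by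
      rw [Matrix.mul_smul, Matrix.mul_one, Matrix.smul_mul, hWu']
    rw [hkroninv, h1, ← Matrix.add_mul, ← Matrix.mul_add]
    congr 2
    rw [smul_one_eq_diagonal, Matrix.diagonal_add]
    have hfun : (fun p : Fin Rdim × Fin L => (((d p)⁻¹ : ℝ) : ℂ) + s)
        = fun p => ((g p : ℝ) : ℂ) := by
      funext p
      rw [hs, hg]
      push_cast
      ring
    rw [hfun]
  have hGG : Matrix.diagonal (fun p => ((g p : ℝ) : ℂ)) *
      Matrix.diagonal (fun p => (((g p)⁻¹ : ℝ) : ℂ)) = 1 := by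
    rw [Matrix.diagonal_mul_diagonal]
    have hfun : (fun p : Fin Rdim × Fin L => ((g p : ℝ) : ℂ) * (((g p)⁻¹ : ℝ) : ℂ))
        = fun _ => (1 : ℂ) := by
      funext p
      rw [← Complex.ofReal_mul, mul_inv_cancel₀ (hgpos p).ne', Complex.ofReal_one]
    rw [hfun, Matrix.diagonal_one]
  rw [hsum, conj_inv_lemma _ _ _ hWu hWu' hGG, Matrix.trace_mul_cycle,
    hWu, Matrix.one_mul, Matrix.trace_diagonal]
  rw [Fintype.sum_prod_type]
  refine Finset.sum_congr rfl fun j _ => Finset.sum_congr rfl fun i _ => ?_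
  have hdji : 0 < η j * δ i := mul_pos (hηpos j) (hδpos i)
  have hden : 1 + c / σ2 * (η j * δ i) ≠ 0 := by positivity
  have hval : (g (j, i))⁻¹ = η j * δ i / (1 + c / σ2 * (η j * δ i)) := by
    rw [hg]
    show ((d (j, i))⁻¹ + c / σ2)⁻¹ = _
    rw [hd]
    show ((η j * δ i)⁻¹ + c / σ2)⁻¹ = _
    field_simp
    rw [mul_add, mul_div_cancel₀ σ2 hdji.ne']
  rw [hval]
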